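/- Let a = (a_1,…,a_n) be any sequence of positive integers (not necessarily monotone). Then the quotient ℂ[x_1,…,x_n]/(h_{a_1}(x_1), h_{a_2}(x_1,x_2), …, h_{a_n}(x_1,…,x_n)) has ℂ-dimension a_1 a_2 ⋯ a_n, and the classes of the monomials x_1^{j_1} ⋯ x_n^{j_n} with 0 ≤ j_i < a_i form a ℂ-basis. -/

import Mathlib

open MvPolynomial

/-- The complete homogeneous symmetric polynomial of degree `j` in the variables indexed
by the finite set `S`. -/
noncomputable def hset (n : ℕ) (S : Finset (Fin n)) (j : ℕ) : MvPolynomial (Fin n) ℂ :=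
  ∑ μ ∈ Finset.univ.filter (fun μ : Sym (Fin n) j => ∀ i ∈ μ, i ∈ S),
    (μ.val.map MvPolynomial.X).prod

/-- The complete homogeneous symmetric polynomial `h_j(x_1, …, x_k)` of degree `j` in the
first `k` variables (these are the 0-based indices `0, …, k-1`). -/
noncomputable def hfirst (n k j : ℕ) : MvPolynomial (Fin n) ℂ :=
  hset n (Finset.univ.filter (fun i : Fin n => (i : ℕ) < k)) j

/-- The ideal `I_b` generated by `h_{b_1}(x_1), h_{b_2}(x_1,x_2), …, h_{b_n}(x_1,…,x_n)`. -/
noncomputable def Ib {n : ℕ} (b : Fin n → ℕ) : Ideal (MvPolynomial (Fin n) ℂ) :=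
  Ideal.span (Set.range fun i : Fin n => hfirst n ((i : ℕ) + 1) (b i))

namespace Stmt16Aux

noncomputable def EE (n : ℕ) :
    MvPolynomial (Fin (n+1)) ℂ ≃ₐ[ℂ] Polynomial (MvPolynomial (Fin n) ℂ) :=
  (MvPolynomial.renameEquiv ℂ (finSuccEquiv' (Fin.last n))).trans
    (MvPolynomial.optionEquivLeft ℂ (Fin n))

lemma EE_X_castSucc (n : ℕ) (i : Fin n) : EE n (X i.castSucc) = Polynomial.C (X i) := by
  have h : finSuccEquiv' (Fin.last n) i.castSucc = some i := by
    rw [← Fin.succAbove_last, finSuccEquiv'_succAbove]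
  simp [EE, rename_X, h, optionEquivLeft_X_some]

lemma EE_X_last (n : ℕ) : EE n (X (Fin.last n)) = Polynomial.X := by
  simp [EE, rename_X, finSuccEquiv'_at, optionEquivLeft_X_none]

lemma EE_rename (n : ℕ) (p : MvPolynomial (Fin n) ℂ) :
    EE n (rename Fin.castSucc p) = Polynomial.C p := by
  have h : (EE n).toAlgHom.comp (rename (R := ℂ) Fin.castSucc)
      = Polynomial.CAlgHom := by
    apply MvPolynomial.algHom_ext
    intro i
    simp [EE_X_castSucc, Polynomial.CAlgHom]
  calc EE n (rename Fin.castSucc p)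
      = ((EE n).toAlgHom.comp (rename (R := ℂ) Fin.castSucc)) p := rfl
    _ = Polynomial.CAlgHom (R := ℂ) p := by rw [h]
    _ = Polynomial.C p := rfl

lemma multiset_lift {α β : Type*} (f : α → β) :
    ∀ (m : Multiset β), (∀ b ∈ m, ∃ a, f a = b) → ∃ m' : Multiset α, m'.map f = m := by
  intro m
  induction m using Multiset.induction with
  | empty => exact fun _ => ⟨0, rfl⟩
  | cons b m ih =>
    intro h
    obtain ⟨a, ha⟩ := h b (Multiset.mem_cons_self _ _)
    obtain ⟨m', hm'⟩ := ih fun x hx => h x (Multiset.mem_cons_of_mem hx)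
    exact ⟨a ::ₘ m', by simp [ha, hm']⟩

lemma sum_map_ite {α : Type*} [DecidableEq α] (m : Multiset α) (a : α) :
    (m.map (fun i => if i = a then (1:ℕ) else 0)).sum = m.count a := by
  induction m using Multiset.induction with
  | empty => simp
  | cons b m ih =>
    by_cases h : b = a
    · simp [h, ih, Multiset.count_cons, add_comm]
    · simp [h, ih, Multiset.count_cons, Ne.symm h]

lemma rename_hfirst (n k j : ℕ) (hk : k ≤ n) :
    rename Fin.castSucc (hfirst n k j) = hfirst (n+1) k j := by
  unfold hfirst hset
  rw [map_sum]
  refine Finset.sum_bij (fun μ _ => μ.map Fin.castSucc) ?_ ?_ ?_ ?_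
  · intro μ hμ
    rw [Finset.mem_filter] at hμ ⊢
    refine ⟨Finset.mem_univ _, ?_⟩
    intro i hi
    rw [Sym.mem_map] at hi
    obtain ⟨b, hb, rfl⟩ := hi
    have hb2 := hμ.2 b hb
    rw [Finset.mem_filter] at hb2 ⊢
    exact ⟨Finset.mem_univ _, by simpa using hb2.2⟩
  · intro μ1 h1 μ2 h2 h
    exact Sym.map_injective (Fin.castSucc_injective n) _ h
  · intro ν hν
    rw [Finset.mem_filter] at hν
    have hall : ∀ b ∈ ν.val, ∃ a : Fin n, Fin.castSucc a = b := by
      intro b hb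
      have hb2 := hν.2 b hb
      rw [Finset.mem_filter] at hb2
      have hbn : (b : ℕ) < n := lt_of_lt_of_le hb2.2 hk
      exact ⟨⟨(b : ℕ), hbn⟩, by ext; simp⟩
    obtain ⟨m', hm'⟩ := multiset_lift _ ν.val hall
    have hcard : m'.card = j := by
      have hc := ν.2
      rw [← hm'] at hc; simpa using hc
    refine ⟨Sym.mk m' hcard, ?_, ?_⟩
    · rw [Finset.mem_filter]
      refine ⟨Finset.mem_univ _, ?_⟩
      intro i hi
      have hmem : Fin.castSucc i ∈ ν.val := by
        rw [← hm']; exact Multiset.mem_map_of_mem _ hi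
      have h2 := hν.2 _ hmem
      rw [Finset.mem_filter] at h2 ⊢
      exact ⟨Finset.mem_univ _, by simpa using h2.2⟩
    · apply Sym.coe_injective
      rw [Sym.coe_map]
      exact hm'
  · intro μ hμ
    rw [map_multiset_prod]
    show _ = (Multiset.map X ((Sym.map Fin.castSucc μ) : Multiset (Fin (n+1)))).prod
    rw [Sym.coe_map]
    simp [Multiset.map_map, Function.comp, rename_X]

lemma EE_hfirst (n k j : ℕ) (hk : k ≤ n) :
    EE n (hfirst (n+1) k j) = Polynomial.C (hfirst n k j) := by
  rw [← rename_hfirst n k j hk, EE_rename]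

lemma F_monic (n j : ℕ) :
    (EE n (hfirst (n+1) (n+1) j)).Monic ∧ (EE n (hfirst (n+1) (n+1) j)).natDegree = j := by
  have hF : EE n (hfirst (n+1) (n+1) j)
      = ∑ μ ∈ Finset.univ.filter
          (fun μ : Sym (Fin (n+1)) j => ∀ i ∈ μ,
            i ∈ Finset.univ.filter (fun i : Fin (n+1) => (i : ℕ) < n+1)),
          ((μ.val.map (fun i => EE n (X i))).prod) := by
    unfold hfirst hset
    rw [map_sum]
    refine Finset.sum_congr rfl fun μ _ => ?_
    rw [map_multiset_prod, Multiset.map_map]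
    rfl
  have hterm : ∀ μ : Sym (Fin (n+1)) j,
      ((μ.val.map (fun i => EE n (X i))).prod).natDegree ≤ μ.val.count (Fin.last n) := by
    intro μ
    refine le_trans (Polynomial.natDegree_multiset_prod_le _) ?_
    rw [Multiset.map_map]
    calc (μ.val.map (Polynomial.natDegree ∘ fun i => EE n (X i))).sum
        ≤ (μ.val.map (fun i => if i = Fin.last n then 1 else 0)).sum := by
          apply Multiset.sum_map_le_sum_map
          intro i _
          by_cases h : i = Fin.last n
          · subst h; simp [EE_X_last]
          · obtain ⟨i', rfl⟩ := Fin.exists_castSucc_eq.mpr h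
            simp [h, EE_X_castSucc]
      _ = μ.val.count (Fin.last n) := sum_map_ite _ _
  have hcount : ∀ μ : Sym (Fin (n+1)) j, μ ≠ Sym.replicate j (Fin.last n) →
      μ.val.count (Fin.last n) < j := by
    intro μ hμ
    have hle : μ.val.count (Fin.last n) ≤ j := by
      have := Multiset.count_le_card (Fin.last n) μ.val
      simpa [μ.2] using this
    rcases lt_or_eq_of_le hle with h | h
    · exact h
    · exfalso
      apply hμ
      apply Sym.coe_injective
      rw [Sym.coe_replicate]
      apply Multiset.eq_replicate.mpr
      have hcard : Multiset.card μ.val = j := μ.2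
      have hcc : Multiset.count (Fin.last n) μ.val = Multiset.card μ.val := by
        rw [h, hcard]
      exact ⟨hcard, fun b hb => (Multiset.count_eq_card.mp hcc b hb).symm⟩
  have hrepl : (Sym.replicate j (Fin.last n)).val.map (fun i => EE n (X i))
      = Multiset.replicate j Polynomial.X := by
    rw [show ((Sym.replicate j (Fin.last n)).val : Multiset (Fin (n+1)))
        = Multiset.replicate j (Fin.last n) from rfl]
    rw [Multiset.map_replicate, EE_X_last]
  have hreplprod : (((Sym.replicate j (Fin.last n)).val.map (fun i => EE n (X i))).prod)
      = Polynomial.X ^ j := by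
    rw [hrepl, Multiset.prod_replicate]
  have hreplmem : Sym.replicate j (Fin.last n) ∈ Finset.univ.filter
      (fun μ : Sym (Fin (n+1)) j => ∀ i ∈ μ,
        i ∈ Finset.univ.filter (fun i : Fin (n+1) => (i : ℕ) < n+1)) := by
    rw [Finset.mem_filter]
    exact ⟨Finset.mem_univ _, fun i _ => by simp [Fin.is_lt, Fin.is_le]⟩
  have hcoeffj : (EE n (hfirst (n+1) (n+1) j)).coeff j = 1 := by
    rw [hF, Polynomial.finset_sum_coeff]
    rw [Finset.sum_eq_single_of_mem _ hreplmem]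
    · rw [hreplprod, Polynomial.coeff_X_pow]; simp
    · intro μ _ hμ
      apply Polynomial.coeff_eq_zero_of_natDegree_lt
      exact lt_of_le_of_lt (hterm μ) (hcount μ hμ)
  have hdegle : (EE n (hfirst (n+1) (n+1) j)).natDegree ≤ j := by
    rw [hF]
    apply Polynomial.natDegree_le_iff_coeff_eq_zero.mpr
    intro N hN
    rw [Polynomial.finset_sum_coeff]
    apply Finset.sum_eq_zero
    intro μ _
    apply Polynomial.coeff_eq_zero_of_natDegree_lt
    have : μ.val.count (Fin.last n) ≤ j := by
      have := Multiset.count_le_card (Fin.last n) μ.val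
      simpa [μ.2] using this
    exact lt_of_le_of_lt (le_trans (hterm μ) this) hN
  constructor
  · exact Polynomial.monic_of_natDegree_le_of_coeff_eq_one j hdegle hcoeffj
  · refine le_antisymm hdegle (Polynomial.le_natDegree_of_ne_zero ?_)
    rw [hcoeffj]; exact one_ne_zero

lemma monomial_eq_prod (n : ℕ) (g : Fin n → ℕ) :
    monomial (Finsupp.equivFunOnFinite.symm g) (1:ℂ) = ∏ i, X i ^ g i := by
  rw [monomial_eq]
  rw [map_one, one_mul]
  rw [Finsupp.prod_fintype]
  · simp
  · intro i; exact pow_zero _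

lemma EE_monomial (n : ℕ) (g : Fin (n+1) → ℕ) :
    EE n (monomial (Finsupp.equivFunOnFinite.symm g) (1:ℂ))
      = Polynomial.C (monomial (Finsupp.equivFunOnFinite.symm fun i => g i.castSucc) (1:ℂ))
        * Polynomial.X ^ g (Fin.last n) := by
  rw [monomial_eq_prod, monomial_eq_prod]
  rw [map_prod]
  rw [Fin.prod_univ_castSucc]
  simp only [map_pow, EE_X_castSucc, EE_X_last]
  simp only [← map_pow]
  rw [← map_prod]

lemma range_fin_succ {α : Type*} {n : ℕ} (v : Fin (n+1) → α) :
    Set.range v = Set.range (v ∘ Fin.castSucc) ∪ {v (Fin.last n)} := by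
  ext x
  constructor
  · rintro ⟨i, rfl⟩
    induction i using Fin.lastCases with
    | last => exact Or.inr rfl
    | cast i => exact Or.inl ⟨i, rfl⟩
  · rintro (⟨i, rfl⟩ | h)
    · exact ⟨i.castSucc, rfl⟩
    · exact ⟨Fin.last n, (Set.mem_singleton_iff.mp h).symm⟩

lemma map_Ib (n : ℕ) (a : Fin (n+1) → ℕ) :
    Ideal.map (EE n) (Ib a)
      = Ideal.map (Polynomial.C) (Ib (fun i : Fin n => a i.castSucc)) ⊔
        Ideal.span {EE n (hfirst (n+1) (n+1) (a (Fin.last n)))} := by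
  unfold Ib
  rw [Ideal.map_span, ← Set.range_comp, range_fin_succ, Ideal.span_union]
  congr 1
  · rw [Ideal.map_span, ← Set.range_comp]
    congr 1
    apply congrArg
    funext i
    show EE n (hfirst (n+1) ((i.castSucc : ℕ)+1) (a i.castSucc))
        = Polynomial.C (hfirst n ((i : ℕ)+1) (a i.castSucc))
    have hc : ((i.castSucc : Fin (n+1)) : ℕ) = (i : ℕ) := rfl
    rw [hc, EE_hfirst n ((i : ℕ)+1) _ i.isLt]

theorem key (n : ℕ) : ∀ (a : Fin n → ℕ), (∀ i, 0 < a i) →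
    ∃ B : Module.Basis ((i : Fin n) → Fin (a i)) ℂ (MvPolynomial (Fin n) ℂ ⧸ Ib a),
      ∀ j, B j = Ideal.Quotient.mk (Ib a)
        (monomial (Finsupp.equivFunOnFinite.symm fun i => (j i : ℕ)) 1) := by
  induction n with
  | zero =>
    intro a _
    have hbot : Ib a = ⊥ := by
      unfold Ib
      rw [Set.range_eq_empty, Ideal.span_empty]
    let ψ : MvPolynomial (Fin 0) ℂ →ₐ[ℂ] ℂ := (isEmptyAlgEquiv ℂ (Fin 0)).toAlgHom
    have hker : RingHom.ker ψ = Ib a := by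
      rw [hbot]
      exact (RingHom.injective_iff_ker_eq_bot _).mp (isEmptyAlgEquiv ℂ (Fin 0)).injective
    have hsurj : Function.Surjective ψ := (isEmptyAlgEquiv ℂ (Fin 0)).surjective
    let e0 : (MvPolynomial (Fin 0) ℂ ⧸ Ib a) ≃ₐ[ℂ] ℂ :=
      (Ideal.quotientEquivAlgOfEq ℂ hker.symm).trans
        (Ideal.quotientKerAlgEquivOfSurjective hsurj)
    refine ⟨(Module.Basis.singleton _ ℂ).map e0.symm.toLinearEquiv, ?_⟩
    intro j
    rw [Module.Basis.map_apply, Module.Basis.singleton_apply]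
    have h1 : (Finsupp.equivFunOnFinite.symm fun i : Fin 0 => ((j i : ℕ)))
        = (0 : Fin 0 →₀ ℕ) := Subsingleton.elim _ _
    rw [h1]
    have h2 : (monomial (0 : Fin 0 →₀ ℕ) (1:ℂ)) = 1 := by
      rw [monomial_zero']; exact map_one _
    rw [h2]
    show e0.symm 1 = Ideal.Quotient.mk (Ib a) 1
    rw [map_one, map_one]
  | succ n ih =>
    intro a hpos
    set a' : Fin n → ℕ := fun i => a i.castSucc with ha'
    obtain ⟨Bn, hBn⟩ := ih a' (fun i => hpos _)
    haveI hnt : Nontrivial (MvPolynomial (Fin n) ℂ ⧸ Ib a') :=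
      nontrivial_of_ne (Bn (fun i => ⟨0, hpos _⟩)) 0 (Bn.ne_zero _)
    set F : Polynomial (MvPolynomial (Fin n) ℂ) :=
      EE n (hfirst (n+1) (n+1) (a (Fin.last n))) with hFdef
    obtain ⟨hFmon, hFdeg⟩ := F_monic n (a (Fin.last n))
    set f : Polynomial (MvPolynomial (Fin n) ℂ ⧸ (Ib a')) :=
      F.map (Ideal.Quotient.mk (Ib a')) with hfdef
    have hfmon : f.Monic := hFmon.map _
    have hfdeg : f.natDegree = a (Fin.last n) := by
      rw [hfdef, hFmon.natDegree_map]; exact hFdeg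
    haveI : (Ideal.span {f}).IsTwoSided := ⟨fun b ha => Ideal.mem_span_singleton.mpr (dvd_mul_of_dvd_left (Ideal.mem_span_singleton.mp ha) b)⟩
    let φ : MvPolynomial (Fin (n+1)) ℂ →ₐ[ℂ] AdjoinRoot f :=
      ((Ideal.Quotient.mkₐ ℂ (Ideal.span {f})).comp
        (Polynomial.mapAlgHom (Ideal.Quotient.mkₐ ℂ (Ib a')))).comp (EE n).toAlgHom
    have hφ : ∀ p, φ p
        = AdjoinRoot.mk f (Polynomial.map (Ideal.Quotient.mk (Ib a')) (EE n p)) := fun p => rfl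
    have hsurj : Function.Surjective φ := by
      intro y
      obtain ⟨p, hp⟩ := AdjoinRoot.mk_surjective y
      obtain ⟨q, hq⟩ := Polynomial.map_surjective _ Ideal.Quotient.mk_surjective p
      exact ⟨(EE n).symm q, by rw [hφ, AlgEquiv.apply_symm_apply, hq, hp]⟩
    have hπsurj : Function.Surjective (Polynomial.mapRingHom (Ideal.Quotient.mk (Ib a'))) :=
      Polynomial.map_surjective _ Ideal.Quotient.mk_surjective
    have hcomap : Ideal.comap (Polynomial.mapRingHom (Ideal.Quotient.mk (Ib a')))
        (Ideal.span {f}) = Ideal.map (EE n) (Ib a) := by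
      have h1 : Ideal.span {f} = Ideal.map (Polynomial.mapRingHom (Ideal.Quotient.mk (Ib a')))
          (Ideal.span {F}) := by
        rw [Ideal.map_span, Set.image_singleton]
        rfl
      rw [h1, Ideal.comap_map_of_surjective _ hπsurj]
      rw [← RingHom.ker_eq_comap_bot, Polynomial.ker_mapRingHom, Ideal.mk_ker,
        map_Ib n a, sup_comm]
    have hkerφ : RingHom.ker φ = Ib a := by
      ext x
      rw [RingHom.mem_ker, hφ, AdjoinRoot.mk_eq_zero, ← Ideal.mem_span_singleton]
      have hx1 : (Polynomial.map (Ideal.Quotient.mk (Ib a')) (EE n x) ∈ Ideal.span {f})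
          ↔ EE n x ∈ Ideal.comap (Polynomial.mapRingHom (Ideal.Quotient.mk (Ib a')))
              (Ideal.span {f}) := Iff.rfl
      rw [hx1, hcomap]
      constructor
      · intro hx
        obtain ⟨z, hz, hzx⟩ := Ideal.mem_map_iff_of_surjective _ (EE n).surjective |>.mp hx
        rwa [← (EE n).injective hzx]
      · intro hx
        exact Ideal.mem_map_of_mem _ hx
    let Φ : (MvPolynomial (Fin (n+1)) ℂ ⧸ Ib a) ≃ₐ[ℂ] AdjoinRoot f :=
      (Ideal.quotientEquivAlgOfEq ℂ hkerφ.symm).trans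
        (Ideal.quotientKerAlgEquivOfSurjective hsurj)
    have hΦmk : ∀ p, Φ (Ideal.Quotient.mk (Ib a) p) = φ p := by
      intro p
      simp only [Φ, AlgEquiv.trans_apply, Ideal.quotientEquivAlgOfEq_mk,
        Ideal.quotientKerAlgEquivOfSurjective_apply]
      exact RingHom.kerLift_mk (φ : MvPolynomial (Fin (n+1)) ℂ →+* AdjoinRoot f) p
    let pb := AdjoinRoot.powerBasis' hfmon
    let bc : Module.Basis ((((i : Fin n) → Fin (a' i))) × Fin f.natDegree) ℂ (AdjoinRoot f) :=
      Bn.smulTower pb.basis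
    let e : ((i : Fin (n+1)) → Fin (a i)) ≃ (((i : Fin n) → Fin (a' i)) × Fin f.natDegree) :=
      { toFun := fun j => (fun i => j i.castSucc, Fin.cast hfdeg.symm (j (Fin.last n)))
        invFun := fun p i => Fin.lastCases (Fin.cast hfdeg p.2) (fun i' => p.1 i') i
        left_inv := by
          intro j
          funext i
          induction i using Fin.lastCases with
          | last => simp
          | cast i => simp
        right_inv := by
          rintro ⟨p1, p2⟩
          simp only [Prod.mk.injEq]
          constructor
          · funext i; simp
          · simp }
    refine ⟨(bc.reindex e.symm).map Φ.symm.toLinearEquiv, ?_⟩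
    intro j
    rw [Module.Basis.map_apply, Module.Basis.reindex_apply, Equiv.symm_symm]
    show Φ.symm (bc (e j)) = _
    rw [AlgEquiv.symm_apply_eq, hΦmk, hφ]
    have hmono := EE_monomial n (fun i => (j i : ℕ))
    rw [hmono]
    rw [Polynomial.map_mul, Polynomial.map_C, Polynomial.map_pow, Polynomial.map_X]
    rw [map_mul, map_pow, AdjoinRoot.mk_C, AdjoinRoot.mk_X]
    have hgen : pb.gen = AdjoinRoot.root f := AdjoinRoot.powerBasis'_gen _
    have h2 : pb.basis (e j).2 = AdjoinRoot.root f ^ ((j (Fin.last n) : ℕ)) := by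
      rw [show pb.basis (e j).2 = pb.gen ^ ((e j).2 : ℕ) from pb.basis_eq_pow _, hgen]
      rfl
    have hbc : bc (e j) = Bn (fun i => j i.castSucc) •
        (AdjoinRoot.root f ^ ((j (Fin.last n) : ℕ))) := by
      rw [show bc (e j) = Bn (e j).1 • pb.basis (e j).2 from Module.Basis.smulTower_apply _ _ _, h2]
      rfl
    have hsmul : ∀ (y : MvPolynomial (Fin n) ℂ ⧸ Ib a') (z : AdjoinRoot f),
        y • z = AdjoinRoot.of f y * z := fun y z => Algebra.smul_def y z
    rw [hbc, hBn]
    exact hsmul _ _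

end Stmt16Aux

/-- For an arbitrary sequence `a` of positive integers (not necessarily monotone), the
quotient `ℂ[x_1,…,x_n]/(h_{a_1}(x_1), …, h_{a_n}(x_1,…,x_n))` has `ℂ`-dimension
`a_1 ⋯ a_n`, with basis the classes of the monomials `x_1^{j_1} ⋯ x_n^{j_n}` with
`0 ≤ j_i < a_i`. -/
theorem stmt16 {n : ℕ} (a : Fin n → ℕ) (hpos : ∀ i, 0 < a i) :
    Module.finrank ℂ (MvPolynomial (Fin n) ℂ ⧸ Ib a) = ∏ i, a i ∧
    ∃ B : Module.Basis ((i : Fin n) → Fin (a i)) ℂ (MvPolynomial (Fin n) ℂ ⧸ Ib a),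
      ∀ j, B j = Ideal.Quotient.mk (Ib a)
        (monomial (Finsupp.equivFunOnFinite.symm fun i => (j i : ℕ)) 1) := by
  obtain ⟨B, hB⟩ := Stmt16Aux.key n a hpos
  refine ⟨?_, B, hB⟩
  rw [Module.finrank_eq_card_basis B]
  simp [Fintype.card_pi]
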